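/- Let α, β, θ > 0 and m₀ ∈ ℝ. Define m(t) = (m₀ − (α − β)/θ)·e^{−θt} + (α − β)/θ for t ≥ 0, and let s̃ : [0,∞) → ℝ be a differentiable function satisfying s̃'(t) = −2θ·s̃(t) + (2α − 2β)·m(t) + θ·|m(t)| + α + β for all t ≥ 0. Then lim_{t→∞} s̃(t) = ((α − β)/θ)² + max{α, β}/θ. -/

import Mathlib

open Set Filter Real

private lemma mono_aux13 (g g' : ℝ → ℝ)
    (hg : ∀ t ∈ Set.Ici (0:ℝ), HasDerivWithinAt g (g' t) (Set.Ici 0) t)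
    (h0 : ∀ t ∈ Set.Ici (0:ℝ), 0 ≤ g' t) : MonotoneOn g (Set.Ici 0) := by
  apply monotoneOn_of_deriv_nonneg (convex_Ici 0)
  · exact fun t ht => (hg t ht).continuousWithinAt
  · intro t ht
    rw [interior_Ici] at ht
    exact ((hg t (mem_Ici.2 (le_of_lt ht))).hasDerivAt
      (Ici_mem_nhds ht)).differentiableAt.differentiableWithinAt
  · intro t ht
    rw [interior_Ici] at ht
    rw [((hg t (mem_Ici.2 (le_of_lt ht))).hasDerivAt (Ici_mem_nhds ht)).deriv]
    exact h0 t (mem_Ici.2 (le_of_lt ht))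

/-- Let `m(t) = (m₀ - (α - β)/θ)·e^{-θt} + (α - β)/θ`, and let `s̃` be a
differentiable function on `[0,∞)` with
`s̃'(t) = -2θ·s̃(t) + (2α - 2β)·m(t) + θ·|m(t)| + α + β` for all `t ≥ 0`. Then
`s̃(t) → ((α - β)/θ)² + max{α, β}/θ` as `t → ∞`. -/
theorem stmt_13 (α β θ m₀ : ℝ) (hα : 0 < α) (hβ : 0 < β) (hθ : 0 < θ)
    (m : ℝ → ℝ)
    (hm : ∀ t : ℝ, m t = (m₀ - (α - β) / θ) * Real.exp (-(θ * t)) + (α - β) / θ)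
    (s : ℝ → ℝ)
    (hs : ∀ t : ℝ, 0 ≤ t →
      HasDerivWithinAt s (-(2 * θ) * s t + (2 * α - 2 * β) * m t + θ * |m t| + α + β)
        (Set.Ici 0) t) :
    Filter.Tendsto s Filter.atTop (nhds (((α - β) / θ) ^ 2 + max α β / θ)) := by
  have hθ0 : θ ≠ 0 := ne_of_gt hθ
  set k : ℝ := (α - β) / θ with hk
  set c : ℝ := m₀ - k with hc
  set L : ℝ := k ^ 2 + max α β / θ with hL
  set C : ℝ := (2 * |α - β| + θ) * |c| with hCdef
  have hC0 : 0 ≤ C := mul_nonneg (by positivity) (abs_nonneg _)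
  have hθk : θ * k = α - β := by rw [hk]; field_simp
  have habs : θ * |k| = |α - β| := by rw [← hθk, abs_mul, abs_of_pos hθ]
  have hmax : 2 * max α β = α + β + |α - β| := by
    rcases le_total α β with h | h
    · rw [max_eq_right h, abs_of_nonpos (by linarith)]; ring
    · rw [max_eq_left h, abs_of_nonneg (by linarith)]; ring
  have hLid : 2 * θ * L = 2 * (α - β) * k + θ * |k| + (α + β) := by
    have h1 : 2 * θ * L = 2 * (θ * k) * k + 2 * max α β := by
      rw [hL]; field_simp
    rw [h1, hθk, habs, hmax]; ring
  -- y and its derivative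
  set ε : ℝ → ℝ := fun t => (2 * α - 2 * β) * m t + θ * |m t| + α + β - 2 * θ * L with hεdef
  set y : ℝ → ℝ := fun t => (s t - L) * Real.exp (2 * θ * t) with hy
  have hyd : ∀ t ∈ Set.Ici (0:ℝ),
      HasDerivWithinAt y (ε t * Real.exp (2 * θ * t)) (Set.Ici 0) t := by
    intro t ht
    have he : HasDerivAt (fun t => Real.exp (2 * θ * t)) (Real.exp (2 * θ * t) * (2 * θ)) t := by
      exact ((Real.hasDerivAt_exp (2 * θ * t)).comp t ((hasDerivAt_id t).const_mul (2 * θ))).congr_deriv (by simp)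
    have h := ((hs t ht).sub_const L).mul he.hasDerivWithinAt
    refine h.congr_deriv ?_
    simp only [hεdef]
    ring
  -- bound on ε
  have hεb : ∀ t : ℝ, 0 ≤ t → |ε t| ≤ C * Real.exp (-(θ * t)) := by
    intro t ht
    have hmk : m t - k = c * Real.exp (-(θ * t)) := by rw [hm t]; ring
    have h1 : |m t - k| = |c| * Real.exp (-(θ * t)) := by
      rw [hmk, abs_mul, abs_of_pos (Real.exp_pos _)]
    have h2 : |(|m t| - |k|)| ≤ |c| * Real.exp (-(θ * t)) :=
      h1 ▸ abs_abs_sub_abs_le_abs_sub _ _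
    have hre : ε t = 2 * (α - β) * (m t - k) + θ * (|m t| - |k|) := by
      simp only [hεdef]
      linear_combination -hLid
    calc |ε t| = |2 * (α - β) * (m t - k) + θ * (|m t| - |k|)| := by rw [hre]
      _ ≤ |2 * (α - β) * (m t - k)| + |θ * (|m t| - |k|)| := abs_add_le _ _
      _ = 2 * |α - β| * |m t - k| + θ * |(|m t| - |k|)| := by
          rw [abs_mul, abs_mul, abs_mul, abs_two, abs_of_pos hθ]
      _ ≤ 2 * |α - β| * (|c| * Real.exp (-(θ * t))) + θ * (|c| * Real.exp (-(θ * t))) := by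
          have a1 := mul_le_mul_of_nonneg_left h1.le (by positivity : (0:ℝ) ≤ 2 * |α - β|)
          have a2 := mul_le_mul_of_nonneg_left h2 hθ.le
          linarith
      _ = C * Real.exp (-(θ * t)) := by rw [hCdef]; ring
  -- bound on y'
  have hyb : ∀ t : ℝ, 0 ≤ t → |ε t * Real.exp (2 * θ * t)| ≤ C * Real.exp (θ * t) := by
    intro t ht
    rw [abs_mul, abs_of_pos (Real.exp_pos _)]
    calc |ε t| * Real.exp (2 * θ * t)
        ≤ C * Real.exp (-(θ * t)) * Real.exp (2 * θ * t) := by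
          gcongr; exact hεb t ht
      _ = C * Real.exp (θ * t) := by rw [mul_assoc, ← Real.exp_add]; ring_nf
  -- G and monotone comparison
  have hGd : ∀ t : ℝ, HasDerivAt (fun t => C / θ * Real.exp (θ * t)) (C * Real.exp (θ * t)) t := by
    intro t
    have he : HasDerivAt (fun t => Real.exp (θ * t)) (Real.exp (θ * t) * θ) t := by
      exact ((Real.hasDerivAt_exp (θ * t)).comp t ((hasDerivAt_id t).const_mul θ)).congr_deriv (by simp)
    have h := he.const_mul (C / θ)
    refine h.congr_deriv ?_
    rw [mul_comm (rexp _) θ, ← mul_assoc, div_mul_cancel₀ C hθ0]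
  have hP : MonotoneOn (fun t => C / θ * Real.exp (θ * t) - y t) (Set.Ici 0) := by
    apply mono_aux13 _ (fun t => C * Real.exp (θ * t) - ε t * Real.exp (2 * θ * t))
    · exact fun t ht => ((hGd t).hasDerivWithinAt).sub (hyd t ht)
    · intro t ht
      have := abs_le.1 (hyb t ht)
      linarith [this.2]
  have hQ : MonotoneOn (fun t => C / θ * Real.exp (θ * t) + y t) (Set.Ici 0) := by
    apply mono_aux13 _ (fun t => C * Real.exp (θ * t) + ε t * Real.exp (2 * θ * t))
    · exact fun t ht => ((hGd t).hasDerivWithinAt).add (hyd t ht)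
    · intro t ht
      have := abs_le.1 (hyb t ht)
      linarith [this.1]
  have hCθ : 0 ≤ C / θ := div_nonneg hC0 hθ.le
  have hybound : ∀ t : ℝ, 0 ≤ t → |y t| ≤ |y 0| + C / θ * Real.exp (θ * t) := by
    intro t ht
    have h1 := hP (self_mem_Ici) ht ht
    have h2 := hQ (self_mem_Ici) ht ht
    simp only [mul_zero, Real.exp_zero, mul_one] at h1 h2
    have hy0 := abs_le.1 (le_refl |y 0|)
    rw [abs_le]
    constructor
    · have := neg_abs_le (y 0)
      nlinarith [abs_nonneg (y 0)]
    · have := le_abs_self (y 0)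
      nlinarith [abs_nonneg (y 0)]
  -- bound on |s t - L|
  have hsb : ∀ t : ℝ, 0 ≤ t →
      |s t - L| ≤ |y 0| * Real.exp (-(2 * θ * t)) + C / θ * Real.exp (-(θ * t)) := by
    intro t ht
    have hst : s t - L = y t * Real.exp (-(2 * θ * t)) := by
      rw [hy]
      simp only
      rw [mul_assoc, ← Real.exp_add]
      simp
    rw [hst, abs_mul, abs_of_pos (Real.exp_pos _)]
    calc |y t| * Real.exp (-(2 * θ * t))
        ≤ (|y 0| + C / θ * Real.exp (θ * t)) * Real.exp (-(2 * θ * t)) := by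
          gcongr; exact hybound t ht
      _ = |y 0| * Real.exp (-(2 * θ * t))
          + C / θ * (Real.exp (θ * t) * Real.exp (-(2 * θ * t))) := by ring
      _ = |y 0| * Real.exp (-(2 * θ * t)) + C / θ * Real.exp (-(θ * t)) := by
          rw [← Real.exp_add]; ring_nf
  -- limits
  have hlim1 : Tendsto (fun t : ℝ => Real.exp (-(θ * t))) atTop (nhds 0) := by
    apply Real.tendsto_exp_atBot.comp
    exact tendsto_neg_atBot_iff.mpr (Tendsto.const_mul_atTop hθ tendsto_id)
  have hlim2 : Tendsto (fun t : ℝ => Real.exp (-(2 * θ * t))) atTop (nhds 0) := by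
    apply Real.tendsto_exp_atBot.comp
    exact tendsto_neg_atBot_iff.mpr (Tendsto.const_mul_atTop (by linarith) tendsto_id)
  have hblim : Tendsto (fun t : ℝ =>
      |y 0| * Real.exp (-(2 * θ * t)) + C / θ * Real.exp (-(θ * t))) atTop (nhds 0) := by
    have := (hlim2.const_mul (|y 0|)).add (hlim1.const_mul (C / θ))
    simpa using this
  rw [tendsto_iff_norm_sub_tendsto_zero]
  apply squeeze_zero' (Filter.eventually_atTop.2 ⟨0, fun t _ => norm_nonneg _⟩)
    (Filter.eventually_atTop.2 ⟨0, fun t ht => ?_⟩) hblim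
  simpa [Real.norm_eq_abs] using hsb t ht
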